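/- Given R = R' > 0 and Q = Q' > 0, suppose Y = Y' > 0 in ℝ^{n×n}, π > 0 and θ > 0 are such that the block matrix [[Z̄, Y(λ̄Q)^{1/2}, Y, Y], [(λ̄Q)^{1/2}Y, −I, 0, 0], [Y, 0, −(1/π)I, 0], [Y, 0, 0, −(1/((N−1)θ))I]] is negative definite, where Z̄ = A Y + Y A' − (λ̲²/λ̄²) B₁ R^{-1} B₁' + (p²/π + q²/θ) B₂ B₂', p² = max_i p_i², q² = max_i q_i², λ̲ = min_i λ_i, λ̄ = max_i λ_i. Then the choices F = −(λ̲/λ̄²) R^{-1} B₁', π_i = π and θ_i = θ (i = 1,…,N), together with the same Y, satisfy for every i = 1,…,N the LMI: the block matrix [[Z_i, F', Y(λ_iQ)^{1/2}, Y, 𝟏'⊗Y], [F, −(1/λ_i²)R^{-1}, 0, 0, 0], [(λ_iQ)^{1/2}Y, 0, −I, 0, 0], [Y, 0, 0, −(1/π_i)I, 0], [𝟏⊗Y, 0, 0, 0, −Θ_i^{-1}]] is negative definite, where 𝟏 = (1,…,1)' ∈ ℝ^{N−1}, Z_i = A Y + Y A' + λ_i F' B₁' + λ_i B₁ F + (π_i^{-1}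 p_i² + θ_i^{-1} q_i²) B₂ B₂', and Θ_i = diag(θ_1,…,θ_{i−1}, θ_{i+1},…,θ_N) ⊗ I_n. -/

import Mathlib

open Matrix

open scoped ComplexOrder in
/-- The square root of a positive semidefinite matrix, as `Matrix.PosSemidef.sqrt` was defined
in Mathlib of December 2024 (removed since). -/
noncomputable def Matrix.PosSemidef.sqrt {n 𝕜 : Type*} [Fintype n] [RCLike 𝕜] [DecidableEq n]
    {A : Matrix n n 𝕜} (hA : A.PosSemidef) : Matrix n n 𝕜 :=
  hA.1.eigenvectorUnitary.1 * diagonal ((↑) ∘ (√·) ∘ hA.1.eigenvalues) *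
    (star hA.1.eigenvectorUnitary : Matrix n n 𝕜)

lemma Matrix.PosSemidef.isHermitian_sqrt {n : Type*} [Fintype n] [DecidableEq n]
    {A : Matrix n n ℝ} (hA : A.PosSemidef) : hA.sqrt.IsHermitian := by
  unfold Matrix.PosSemidef.sqrt
  simp [IsHermitian, conjTranspose_mul, Matrix.mul_assoc, star_eq_conjTranspose,
    conjTranspose_eq_transpose_of_trivial]

lemma Matrix.PosSemidef.sqrt_mul_self {n : Type*} [Fintype n] [DecidableEq n]
    {A : Matrix n n ℝ} (hA : A.PosSemidef) : hA.sqrt * hA.sqrt = A := by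
  unfold Matrix.PosSemidef.sqrt
  have hU := Unitary.star_mul_self hA.1.eigenvectorUnitary
  have hs := hA.1.spectral_theorem
  rw [Unitary.conjStarAlgAut_apply] at hs
  conv_rhs => rw [hs]
  have hU' : (star (hA.1.eigenvectorUnitary : Matrix n n ℝ)) * hA.1.eigenvectorUnitary = 1 := by
    exact Unitary.star_mul_self_of_mem hA.1.eigenvectorUnitary.2
  have hd : diagonal (RCLike.ofReal ∘ (fun x => √x) ∘ hA.1.eigenvalues : n → ℝ)
      * diagonal (RCLike.ofReal ∘ (fun x => √x) ∘ hA.1.eigenvalues : n → ℝ)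
      = diagonal (RCLike.ofReal ∘ hA.1.eigenvalues : n → ℝ) := by
    rw [diagonal_mul_diagonal]
    congr 1
    funext i
    simp [Real.mul_self_sqrt (hA.eigenvalues_nonneg i)]
  simp only [Matrix.mul_assoc]
  rw [← Matrix.mul_assoc (star (hA.1.eigenvectorUnitary : Matrix n n ℝ)), hU', Matrix.one_mul,
    ← Matrix.mul_assoc (diagonal _) (diagonal _), hd]

section helpers
variable {m l : Type*} [Fintype m] [Fintype l] [DecidableEq m] [DecidableEq l]

lemma ct_eq_t (B : Matrix m l ℝ) : Bᴴ = Bᵀ := by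
  ext i j; simp [conjTranspose_apply]

lemma herm_of_symm {M : Matrix m m ℝ} (h : M.IsHermitian) : Mᵀ = M := by
  rw [← ct_eq_t]; exact h

lemma psd_smul {M : Matrix m m ℝ} (hM : M.PosSemidef) {c : ℝ} (hc : 0 ≤ c) :
    (c • M).PosSemidef := by
  refine .of_dotProduct_mulVec_nonneg ?_ fun x => ?_
  · unfold Matrix.IsHermitian
    rw [conjTranspose_smul, hM.1.eq, star_trivial]
  · rw [smul_mulVec, dotProduct_smul, smul_eq_mul]
    exact mul_nonneg hc (hM.dotProduct_mulVec_nonneg x)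

lemma pd_smul {M : Matrix m m ℝ} (hM : M.PosDef) {c : ℝ} (hc : 0 < c) :
    (c • M).PosDef := by
  refine .of_dotProduct_mulVec_pos ?_ fun x hx => ?_
  · unfold Matrix.IsHermitian
    rw [conjTranspose_smul, hM.1.eq, star_trivial]
  · rw [smul_mulVec, dotProduct_smul, smul_eq_mul]
    exact mul_pos hc (hM.dotProduct_mulVec_pos hx)

lemma posDef_fromBlocks_iff' {A : Matrix m m ℝ} {B : Matrix m l ℝ} {D W : Matrix l l ℝ}
    (hD : D.PosDef) (hW : D * W = 1) :
    (fromBlocks A B Bᵀ D).PosDef ↔ (A - B * W * Bᵀ).PosDef := by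
  have hInv : Invertible D := invertibleOfRightInverse _ _ hW
  have hWD : W = D⁻¹ := (Matrix.inv_eq_right_inv hW).symm
  rw [hWD, ← ct_eq_t B]
  rw [posDef_iff_dotProduct_mulVec, posDef_iff_dotProduct_mulVec]
  constructor
  · rintro ⟨h1, h2⟩
    refine ⟨(Matrix.IsHermitian.fromBlocks₂₂ A B hD.1).mp h1, fun x hx => ?_⟩
    have key := Matrix.schur_complement_eq₂₂ A B x (-((D⁻¹ * Bᴴ) *ᵥ x)) hD.1
    have hv : (x ⊕ᵥ (-((D⁻¹ * Bᴴ) *ᵥ x))) ≠ 0 := by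
      intro h0
      exact hx (funext fun k => congrFun h0 (Sum.inl k))
    have h3 := h2 hv
    rw [dotProduct_mulVec, key] at h3
    simp only [add_neg_cancel, star_zero, zero_vecMul, zero_dotProduct, zero_add] at h3
    rwa [dotProduct_mulVec]
  · rintro ⟨h1, h2⟩
    refine ⟨(Matrix.IsHermitian.fromBlocks₂₂ A B hD.1).mpr h1, fun v hv => ?_⟩
    rw [dotProduct_mulVec, ← Sum.elim_comp_inl_inr v,
      Matrix.schur_complement_eq₂₂ A B _ _ hD.1]
    by_cases hx : v ∘ Sum.inl = 0
    · have hy : v ∘ Sum.inr ≠ 0 := by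
        intro h0
        apply hv
        rw [← Sum.elim_comp_inl_inr v, hx, h0]
        ext (i | i) <;> rfl
      rw [hx]
      simp only [mulVec_zero, zero_add, star_zero, zero_vecMul, zero_dotProduct, add_zero]
      have := hD.dotProduct_mulVec_pos hy
      rwa [dotProduct_mulVec] at this
    · have t2 : 0 < star (v ∘ Sum.inl) ᵥ* (A - B * D⁻¹ * Bᴴ) ⬝ᵥ (v ∘ Sum.inl) := by
        have := h2 hx
        rwa [dotProduct_mulVec] at this
      have t1 : 0 ≤ star ((D⁻¹ * Bᴴ) *ᵥ (v ∘ Sum.inl) + v ∘ Sum.inr) ᵥ* D ⬝ᵥ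
          ((D⁻¹ * Bᴴ) *ᵥ (v ∘ Sum.inl) + v ∘ Sum.inr) := by
        have := hD.posSemidef.dotProduct_mulVec_nonneg ((D⁻¹ * Bᴴ) *ᵥ (v ∘ Sum.inl) + v ∘ Sum.inr)
        rwa [dotProduct_mulVec] at this
      linarith

lemma posDef_fromBlocks_diag {A : Matrix m m ℝ} {D : Matrix l l ℝ}
    (hA : A.PosDef) (hD : D.PosDef) : (fromBlocks A 0 0 D).PosDef := by
  refine .of_dotProduct_mulVec_pos (isHermitian_fromBlocks_iff.mpr ⟨hA.1, by simp, by simp, hD.1⟩) fun v hv => ?_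
  rw [← Sum.elim_comp_inl_inr v, fromBlocks_mulVec]
  simp only [Sum.elim_comp_inl, Sum.elim_comp_inr, zero_mulVec, mulVec_zero, zero_add, add_zero, Function.star_sumElim]
  rw [sumElim_dotProduct_sumElim]
  by_cases hx : v ∘ Sum.inl = 0
  · have hy : v ∘ Sum.inr ≠ 0 := by
      intro h0
      apply hv
      rw [← Sum.elim_comp_inl_inr v, hx, h0]
      ext (i | i) <;> rfl
    rw [hx]
    simpa using hD.dotProduct_mulVec_pos hy
  · have := hD.posSemidef.dotProduct_mulVec_nonneg (v ∘ Sum.inr)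
    have := hA.dotProduct_mulVec_pos hx
    linarith

lemma neg_fromBlocks_posDef_iff {A : Matrix m m ℝ} {B : Matrix m l ℝ} {D W : Matrix l l ℝ}
    (hD : (-D).PosDef) (hW : (-D) * W = 1) :
    (-(fromBlocks A B Bᵀ D)).PosDef ↔ (-(A + B * W * Bᵀ)).PosDef := by
  have h1 : -(fromBlocks A B Bᵀ D) = fromBlocks (-A) (-B) (-B)ᵀ (-D) := by
    rw [fromBlocks_neg, transpose_neg]
  rw [h1, posDef_fromBlocks_iff' hD hW]
  have h2 : (-A) - (-B) * W * (-B)ᵀ = -(A + B * W * Bᵀ) := by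
    rw [transpose_neg, Matrix.neg_mul, Matrix.mul_neg, Matrix.neg_mul, neg_neg,
      neg_add, ← sub_eq_add_neg]
  rw [h2]


end helpers

set_option maxHeartbeats 1600000 in
/-- Lemma 3. If the single 4×4 block LMI of Theorem 2 is feasible with
`Y > 0`, `π > 0`, `θ > 0`, then `F = -(λ̲/λ̄²) R⁻¹B₁'`, `π_i = π`, `θ_i = θ` together with the
same `Y` satisfy all `N` of the 5×5 block LMIs of Theorem 1. -/
theorem stmt2_single_LMI_implies_coupled_LMIs
    (n p N : ℕ) (hN : 2 ≤ N)
    (A : Matrix (Fin n) (Fin n) ℝ)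
    (B₁ : Matrix (Fin n) (Fin p) ℝ)
    (B₂ : Matrix (Fin n) (Fin n) ℝ)
    -- the graph, pinning matrix and spectral data
    (a : Fin N → Fin N → ℝ)
    (hsymm : ∀ i j, a i j = a j i)
    (hdiaga : ∀ i, a i i = 0)
    (h01 : ∀ i j, a i j = 0 ∨ a i j = 1)
    (hconn : ∀ i j : Fin N, Relation.ReflTransGen (fun u v => a u v = 1) i j)
    (g : Fin N → ℝ) (hg01 : ∀ i, g i = 0 ∨ g i = 1) (hgne : ∃ i, g i = 1)
    (L : Matrix (Fin N) (Fin N) ℝ)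
    (hL : L = Matrix.diagonal (fun i => ∑ j, a i j) - Matrix.of a)
    (G : Matrix (Fin N) (Fin N) ℝ) (hG : G = Matrix.diagonal g)
    (lam : Fin N → ℝ) (hlampos : ∀ i, 0 < lam i)
    (T : Matrix (Fin N) (Fin N) ℝ)
    (hT : T * Tᵀ = 1)
    (hTdiag : Tᵀ * (L + G) * T = Matrix.diagonal lam)
    (f : Fin N → Fin N → ℝ) (hf : f = fun i j => (Tᵀ * G * T) i j)
    (pc : Fin N → ℝ) (hpc : pc = fun i => f i i - lam i)
    (qsq : Fin N → ℝ) (hqsq : qsq = fun i => ∑ j ∈ Finset.univ.erase i, (f i j) ^ 2)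
    (psqmax qsqmax lamlo lamhi : ℝ)
    (hpsqmax : IsGreatest (Set.range fun i => (pc i) ^ 2) psqmax)
    (hqsqmax : IsGreatest (Set.range qsq) qsqmax)
    (hlamlo : IsLeast (Set.range lam) lamlo)
    (hlamhi : IsGreatest (Set.range lam) lamhi)
    -- weights and LMI variables
    (Q : Matrix (Fin n) (Fin n) ℝ) (hQ : Q.PosDef)
    (R : Matrix (Fin p) (Fin p) ℝ) (hR : R.PosDef)
    (Y : Matrix (Fin n) (Fin n) ℝ) (hY : Y.PosDef)
    (π θ : ℝ) (hπ : 0 < π) (hθ : 0 < θ)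
    -- feasibility of the single 4×4 block LMI of Theorem 2
    (hLMI : (-(Matrix.fromBlocks
        (A * Y + Y * Aᵀ - (lamlo ^ 2 / lamhi ^ 2) • (B₁ * R⁻¹ * B₁ᵀ)
          + (psqmax / π + qsqmax / θ) • (B₂ * B₂ᵀ))
        (Matrix.fromCols (Y * (Real.sqrt lamhi • hQ.posSemidef.sqrt))
          (Matrix.fromCols Y Y))
        (Matrix.fromRows ((Real.sqrt lamhi • hQ.posSemidef.sqrt) * Y)
          (Matrix.fromRows Y Y))
        (Matrix.fromBlocks (-1 : Matrix (Fin n) (Fin n) ℝ) 0 0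
          (Matrix.fromBlocks (-(π⁻¹ • (1 : Matrix (Fin n) (Fin n) ℝ))) 0 0
            (-((((N : ℝ) - 1) * θ)⁻¹ • (1 : Matrix (Fin n) (Fin n) ℝ))))))).PosDef)
    (F : Matrix (Fin p) (Fin n) ℝ)
    (hF : F = -((lamlo / lamhi ^ 2) • (R⁻¹ * B₁ᵀ))) :
    -- all N of the 5×5 block LMIs of Theorem 1 hold with π_i = π and θ_i = θ
    ∀ i : Fin N,
      (-(Matrix.fromBlocks
        (A * Y + Y * Aᵀ + lam i • (Fᵀ * B₁ᵀ) + lam i • (B₁ * F)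
          + (π⁻¹ * (pc i) ^ 2 + θ⁻¹ * qsq i) • (B₂ * B₂ᵀ))
        (Matrix.fromCols Fᵀ
          (Matrix.fromCols (Y * (Real.sqrt (lam i) • hQ.posSemidef.sqrt))
            (Matrix.fromCols Y
              (Matrix.of fun c (x : {j : Fin N // j ≠ i} × Fin n) => Y c x.2))))
        (Matrix.fromRows F
          (Matrix.fromRows ((Real.sqrt (lam i) • hQ.posSemidef.sqrt) * Y)
            (Matrix.fromRows Y
              (Matrix.of fun (x : {j : Fin N // j ≠ i} × Fin n) c => Y x.2 c))))
        (Matrix.fromBlocks (-(((lam i) ^ 2)⁻¹ • R⁻¹)) 0 0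
          (Matrix.fromBlocks (-1 : Matrix (Fin n) (Fin n) ℝ) 0 0
            (Matrix.fromBlocks (-(π⁻¹ • (1 : Matrix (Fin n) (Fin n) ℝ))) 0 0
              (-(Matrix.diagonal
                  (fun _ : {j : Fin N // j ≠ i} × Fin n => θ⁻¹)))))))).PosDef := by
  
  -- scalar facts
  obtain ⟨⟨jhi, hjhi⟩, hhiub⟩ := hlamhi
  obtain ⟨⟨jlo, hjlo⟩, hloub⟩ := hlamlo
  have hlamhipos : 0 < lamhi := hjhi ▸ hlampos jhi
  have hlamlopos : 0 < lamlo := hjlo ▸ hlampos jlo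
  have hN1 : (0:ℝ) < (N:ℝ) - 1 := by
    have : (2:ℝ) ≤ (N:ℝ) := by exact_mod_cast hN
    linarith
  -- matrix facts
  have hYs : Yᵀ = Y := herm_of_symm hY.1
  have hYsym : ∀ a b, Y a b = Y b a := fun a b => congrFun (congrFun hYs b) a
  set sq := hQ.posSemidef.sqrt with hsqdef
  have hsqs : sqᵀ = sq := herm_of_symm hQ.posSemidef.isHermitian_sqrt
  have hsqm : sq * sq = Q := hQ.posSemidef.sqrt_mul_self
  have hRdet : IsUnit R.det := hR.det_pos.ne'.isUnit
  have hRis : (R⁻¹)ᵀ = R⁻¹ := herm_of_symm hR.inv.1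
  have hRR : R⁻¹ * R = 1 := Matrix.nonsing_inv_mul R hRdet
  -- common PSD facts
  have hSpsd : (B₁ * R⁻¹ * B₁ᵀ).PosSemidef := by
    have := hR.inv.posSemidef.mul_mul_conjTranspose_same B₁
    rwa [ct_eq_t] at this
  have hYQY : (Y * Q * Y).PosSemidef := by
    have := hQ.posSemidef.mul_mul_conjTranspose_same Y
    rwa [ct_eq_t, hYs] at this
  have hBB : (B₂ * B₂ᵀ).PosSemidef := by
    have := Matrix.posSemidef_self_mul_conjTranspose B₂
    rwa [ct_eq_t] at this
  -- the π-block product (shared)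
  have eπ : Y * (π • (1 : Matrix (Fin n) (Fin n) ℝ)) * Y = π • (Y * Y) := by
    rw [Matrix.mul_smul, Matrix.mul_one, Matrix.smul_mul]
  have eθh : Y * ((((N:ℝ)-1) * θ) • (1 : Matrix (Fin n) (Fin n) ℝ)) * Y
      = (((N:ℝ)-1) * θ) • (Y * Y) := by
    rw [Matrix.mul_smul, Matrix.mul_one, Matrix.smul_mul]
  -- process the hypothesis
  have hCh : (Matrix.fromRows ((Real.sqrt lamhi • sq) * Y) (Matrix.fromRows Y Y))
      = (Matrix.fromCols (Y * (Real.sqrt lamhi • sq)) (Matrix.fromCols Y Y))ᵀ := by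
    rw [transpose_fromCols, transpose_fromCols, transpose_mul, transpose_smul, hsqs, hYs]
  rw [hCh] at hLMI
  have hnegDh : -(Matrix.fromBlocks (-1 : Matrix (Fin n) (Fin n) ℝ) 0 0
        (Matrix.fromBlocks (-(π⁻¹ • (1 : Matrix (Fin n) (Fin n) ℝ))) 0 0
          (-((((N : ℝ) - 1) * θ)⁻¹ • (1 : Matrix (Fin n) (Fin n) ℝ)))))
      = Matrix.fromBlocks (1 : Matrix (Fin n) (Fin n) ℝ) 0 0
        (Matrix.fromBlocks (π⁻¹ • (1 : Matrix (Fin n) (Fin n) ℝ)) 0 0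
          ((((N : ℝ) - 1) * θ)⁻¹ • (1 : Matrix (Fin n) (Fin n) ℝ))) := by
    simp [Matrix.fromBlocks_neg]
  have hDhPD : (-(Matrix.fromBlocks (-1 : Matrix (Fin n) (Fin n) ℝ) 0 0
        (Matrix.fromBlocks (-(π⁻¹ • (1 : Matrix (Fin n) (Fin n) ℝ))) 0 0
          (-((((N : ℝ) - 1) * θ)⁻¹ • (1 : Matrix (Fin n) (Fin n) ℝ)))))).PosDef := by
    rw [hnegDh]
    exact posDef_fromBlocks_diag .one (posDef_fromBlocks_diag (pd_smul .one (inv_pos.mpr hπ))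
      (pd_smul .one (inv_pos.mpr (mul_pos hN1 hθ))))
  have hWh : (-(Matrix.fromBlocks (-1 : Matrix (Fin n) (Fin n) ℝ) 0 0
        (Matrix.fromBlocks (-(π⁻¹ • (1 : Matrix (Fin n) (Fin n) ℝ))) 0 0
          (-((((N : ℝ) - 1) * θ)⁻¹ • (1 : Matrix (Fin n) (Fin n) ℝ))))))
      * (Matrix.fromBlocks (1 : Matrix (Fin n) (Fin n) ℝ) 0 0
        (Matrix.fromBlocks (π • (1 : Matrix (Fin n) (Fin n) ℝ)) 0 0
          ((((N : ℝ) - 1) * θ) • (1 : Matrix (Fin n) (Fin n) ℝ)))) = 1 := by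
    rw [hnegDh]
    have e2 : (π⁻¹ • (1 : Matrix (Fin n) (Fin n) ℝ)) * (π • 1) = 1 := by
      simp only [Matrix.smul_mul, Matrix.mul_smul, smul_smul, Matrix.one_mul, Matrix.mul_one]
      rw [mul_inv_cancel₀ hπ.ne', one_smul]
    have e3 : ((((N : ℝ) - 1) * θ)⁻¹ • (1 : Matrix (Fin n) (Fin n) ℝ))
        * ((((N : ℝ) - 1) * θ) • 1) = 1 := by
      simp only [Matrix.smul_mul, Matrix.mul_smul, smul_smul, Matrix.one_mul, Matrix.mul_one]
      rw [mul_inv_cancel₀ (mul_pos hN1 hθ).ne', one_smul]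
    simp only [Matrix.fromBlocks_multiply, Matrix.mul_zero, Matrix.zero_mul, add_zero,
      zero_add, Matrix.one_mul, e2, e3]
    rw [Matrix.fromBlocks_one, Matrix.fromBlocks_one]
  rw [neg_fromBlocks_posDef_iff hDhPD hWh] at hLMI
  have e1h : Y * (Real.sqrt lamhi • sq) * ((Real.sqrt lamhi • sq) * Y)
      = lamhi • (Y * Q * Y) := by
    simp only [Matrix.mul_smul, Matrix.smul_mul, smul_smul]
    rw [Real.mul_self_sqrt hlamhipos.le]
    congr 1
    rw [Matrix.mul_assoc, ← Matrix.mul_assoc sq sq Y, hsqm, ← Matrix.mul_assoc]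
  simp only [transpose_fromCols, transpose_mul, transpose_smul, hsqs, hYs,
    fromCols_mul_fromBlocks, Matrix.mul_zero, Matrix.zero_mul, add_zero, zero_add,
    fromCols_mul_fromRows, Matrix.mul_one, e1h, eπ, eθh] at hLMI
  -- now the goal
  intro i
  have hlamipos := hlampos i
  have hlo_le : lamlo ≤ lam i := hloub ⟨i, rfl⟩
  have hle_hi : lam i ≤ lamhi := hhiub ⟨i, rfl⟩
  have hCg : (Matrix.fromRows F
        (Matrix.fromRows ((Real.sqrt (lam i) • sq) * Y)
          (Matrix.fromRows Y
            (Matrix.of fun (x : {j : Fin N // j ≠ i} × Fin n) c => Y x.2 c))))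
      = (Matrix.fromCols Fᵀ
        (Matrix.fromCols (Y * (Real.sqrt (lam i) • sq))
          (Matrix.fromCols Y
            (Matrix.of fun c (x : {j : Fin N // j ≠ i} × Fin n) => Y c x.2))))ᵀ := by
    have hrep : (Matrix.of fun (x : {j : Fin N // j ≠ i} × Fin n) c => Y x.2 c)
        = (Matrix.of fun c (x : {j : Fin N // j ≠ i} × Fin n) => Y c x.2)ᵀ := by
      ext x c
      exact hYsym x.2 c
    rw [transpose_fromCols, transpose_fromCols, transpose_fromCols,
      transpose_transpose, transpose_mul, transpose_smul, hsqs, hYs, hrep]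
  rw [hCg]
  have hnegDg : -(Matrix.fromBlocks (-(((lam i) ^ 2)⁻¹ • R⁻¹)) 0 0
        (Matrix.fromBlocks (-1 : Matrix (Fin n) (Fin n) ℝ) 0 0
          (Matrix.fromBlocks (-(π⁻¹ • (1 : Matrix (Fin n) (Fin n) ℝ))) 0 0
            (-(Matrix.diagonal (fun _ : {j : Fin N // j ≠ i} × Fin n => θ⁻¹))))))
      = Matrix.fromBlocks (((lam i) ^ 2)⁻¹ • R⁻¹) 0 0
        (Matrix.fromBlocks 1 0 0
          (Matrix.fromBlocks (π⁻¹ • (1 : Matrix (Fin n) (Fin n) ℝ)) 0 0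
            (Matrix.diagonal (fun _ : {j : Fin N // j ≠ i} × Fin n => θ⁻¹)))) := by
    simp [Matrix.fromBlocks_neg]
  have hDgPD : (-(Matrix.fromBlocks (-(((lam i) ^ 2)⁻¹ • R⁻¹)) 0 0
        (Matrix.fromBlocks (-1 : Matrix (Fin n) (Fin n) ℝ) 0 0
          (Matrix.fromBlocks (-(π⁻¹ • (1 : Matrix (Fin n) (Fin n) ℝ))) 0 0
            (-(Matrix.diagonal (fun _ : {j : Fin N // j ≠ i} × Fin n => θ⁻¹))))))).PosDef := by
    rw [hnegDg]
    exact posDef_fromBlocks_diag (pd_smul hR.inv (by positivity))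
      (posDef_fromBlocks_diag .one
        (posDef_fromBlocks_diag (pd_smul .one (inv_pos.mpr hπ))
          (Matrix.PosDef.diagonal fun _ => inv_pos.mpr hθ)))
  have hWg : (-(Matrix.fromBlocks (-(((lam i) ^ 2)⁻¹ • R⁻¹)) 0 0
        (Matrix.fromBlocks (-1 : Matrix (Fin n) (Fin n) ℝ) 0 0
          (Matrix.fromBlocks (-(π⁻¹ • (1 : Matrix (Fin n) (Fin n) ℝ))) 0 0
            (-(Matrix.diagonal (fun _ : {j : Fin N // j ≠ i} × Fin n => θ⁻¹)))))))
      * (Matrix.fromBlocks (((lam i) ^ 2) • R) 0 0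
        (Matrix.fromBlocks 1 0 0
          (Matrix.fromBlocks (π • (1 : Matrix (Fin n) (Fin n) ℝ)) 0 0
            (Matrix.diagonal (fun _ : {j : Fin N // j ≠ i} × Fin n => θ))))) = 1 := by
    rw [hnegDg]
    have e1 : (((lam i) ^ 2)⁻¹ • R⁻¹) * (((lam i) ^ 2) • R) = 1 := by
      simp only [Matrix.smul_mul, Matrix.mul_smul, smul_smul]
      rw [hRR, mul_inv_cancel₀ (by positivity : ((lam i)^2 : ℝ) ≠ 0), one_smul]
    have e2 : (π⁻¹ • (1 : Matrix (Fin n) (Fin n) ℝ)) * (π • 1) = 1 := by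
      simp only [Matrix.smul_mul, Matrix.mul_smul, smul_smul, Matrix.one_mul, Matrix.mul_one]
      rw [mul_inv_cancel₀ hπ.ne', one_smul]
    have e3 : (Matrix.diagonal (fun _ : {j : Fin N // j ≠ i} × Fin n => θ⁻¹))
        * (Matrix.diagonal fun _ => θ) = 1 := by
      rw [Matrix.diagonal_mul_diagonal]
      simp [inv_mul_cancel₀ hθ.ne']
    simp only [Matrix.fromBlocks_multiply, Matrix.mul_zero, Matrix.zero_mul, add_zero,
      zero_add, Matrix.one_mul, e1, e2, e3]
    rw [Matrix.fromBlocks_one, Matrix.fromBlocks_one, Matrix.fromBlocks_one]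
  rw [neg_fromBlocks_posDef_iff hDgPD hWg]
  -- compute the pieces of B * W * Bᵀ
  have e4 : Fᵀ * (((lam i) ^ 2) • R) * F
      = ((lam i)^2 * (lamlo/lamhi^2)^2) • (B₁ * R⁻¹ * B₁ᵀ) := by
    rw [hF, transpose_neg, transpose_smul, transpose_mul, transpose_transpose, hRis]
    simp only [Matrix.neg_mul, Matrix.mul_neg, neg_neg, Matrix.smul_mul, Matrix.mul_smul,
      smul_smul]
    rw [Matrix.mul_assoc B₁ R⁻¹ R, hRR, Matrix.mul_one, ← Matrix.mul_assoc]
    simp only [smul_neg, neg_neg, smul_smul]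
    congr 1
    ring
  have e1g : Y * (Real.sqrt (lam i) • sq) * ((Real.sqrt (lam i) • sq) * Y)
      = lam i • (Y * Q * Y) := by
    simp only [Matrix.mul_smul, Matrix.smul_mul, smul_smul]
    rw [Real.mul_self_sqrt hlamipos.le]
    congr 1
    rw [Matrix.mul_assoc, ← Matrix.mul_assoc sq sq Y, hsqm, ← Matrix.mul_assoc]
  have e3g : (Matrix.of fun c (x : {j : Fin N // j ≠ i} × Fin n) => Y c x.2)
        * (Matrix.diagonal (fun _ : {j : Fin N // j ≠ i} × Fin n => θ))
        * (Matrix.of fun c (x : {j : Fin N // j ≠ i} × Fin n) => Y c x.2)ᵀ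
      = (((N:ℝ)-1) * θ) • (Y * Y) := by
    have hmd : (Matrix.of fun c (x : {j : Fin N // j ≠ i} × Fin n) => Y c x.2)
        * (Matrix.diagonal (fun _ : {j : Fin N // j ≠ i} × Fin n => θ))
        = Matrix.of fun c (x : {j : Fin N // j ≠ i} × Fin n) => Y c x.2 * θ := by
      ext c x
      simp [Matrix.mul_diagonal]
    rw [hmd]
    ext c c'
    rw [Matrix.mul_apply]
    simp only [Matrix.of_apply, Matrix.transpose_apply, Matrix.smul_apply, smul_eq_mul]
    rw [Fintype.sum_prod_type]
    have hinner : ∀ j : {j : Fin N // j ≠ i},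
        (∑ k, Y c k * θ * Y c' k) = θ * ∑ k, Y c k * Y k c' := by
      intro j
      rw [Finset.mul_sum]
      exact Finset.sum_congr rfl fun k _ => by rw [hYsym c' k]; ring
    rw [Finset.sum_congr rfl fun j _ => hinner j, Finset.sum_const, Finset.card_univ]
    have hcard : Fintype.card {j : Fin N // j ≠ i} = N - 1 := by
      have h1 := Fintype.card_subtype_compl (fun j : Fin N => j = i)
      simp only [Fintype.card_subtype_eq, Fintype.card_fin] at h1
      exact h1
    rw [hcard, nsmul_eq_mul, Nat.cast_sub (by omega : 1 ≤ N), Nat.cast_one, Matrix.mul_apply]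
    ring
  have hZF1 : Fᵀ * B₁ᵀ = -((lamlo/lamhi^2) • (B₁ * R⁻¹ * B₁ᵀ)) := by
    rw [hF, transpose_neg, transpose_smul, transpose_mul, transpose_transpose, hRis]
    rw [Matrix.neg_mul, Matrix.smul_mul]
  have hZF2 : B₁ * F = -((lamlo/lamhi^2) • (B₁ * R⁻¹ * B₁ᵀ)) := by
    rw [hF, Matrix.mul_neg, Matrix.mul_smul, ← Matrix.mul_assoc]
  simp only [transpose_fromCols, transpose_mul, transpose_smul, transpose_transpose,
    hsqs, hYs, fromCols_mul_fromBlocks, Matrix.mul_zero, Matrix.zero_mul, add_zero,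
    zero_add, fromCols_mul_fromRows, Matrix.mul_one, e4, e1g, eπ, e3g, hZF1, hZF2]
  -- final comparison
  set S := B₁ * R⁻¹ * B₁ᵀ with hS
  set YQY := Y * Q * Y with hYQYdef
  set YY := Y * Y with hYYdef
  set BB := B₂ * B₂ᵀ with hBBdef
  set M1 := A * Y + Y * Aᵀ with hM1
  have hd1 : 0 ≤ 2*(lam i)*(lamlo/lamhi^2) - (lam i)^2*(lamlo/lamhi^2)^2 - lamlo^2/lamhi^2 := by
    have hpoly : (lam i)^2*lamlo^2 + lamlo^2*lamhi^2 ≤ 2*(lam i)*lamlo*lamhi^2 := by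
      have hab : lam i * lamlo ≤ lamhi * lamhi :=
        mul_le_mul hle_hi (hlo_le.trans hle_hi) hlamlopos.le hlamhipos.le
      have h1 : (lam i * lamlo) * (lam i * lamlo) ≤ (lam i * lamlo) * (lamhi * lamhi) :=
        mul_le_mul_of_nonneg_left hab (by positivity)
      have h2 : lamlo * lamlo ≤ lamlo * lam i :=
        mul_le_mul_of_nonneg_left hlo_le hlamlopos.le
      have h3 := mul_le_mul_of_nonneg_right h2 (mul_self_nonneg lamhi)
      nlinarith [h1, h3]
    have hrw : 2*(lam i)*(lamlo/lamhi^2) - (lam i)^2*(lamlo/lamhi^2)^2 - lamlo^2/lamhi^2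
        = (2*(lam i)*lamlo*lamhi^2 - ((lam i)^2*lamlo^2 + lamlo^2*lamhi^2))/lamhi^4 := by
      field_simp
      ring
    rw [hrw]
    apply div_nonneg _ (by positivity)
    linarith
  have hd2 : 0 ≤ lamhi - lam i := by linarith
  have hd3 : 0 ≤ (psqmax/π + qsqmax/θ) - (π⁻¹*(pc i)^2 + θ⁻¹*qsq i) := by
    have h1 : (pc i)^2 ≤ psqmax := hpsqmax.2 ⟨i, rfl⟩
    have h2 : qsq i ≤ qsqmax := hqsqmax.2 ⟨i, rfl⟩
    have h3 : (0:ℝ) < π⁻¹ := inv_pos.mpr hπ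
    have h4 : (0:ℝ) < θ⁻¹ := inv_pos.mpr hθ
    rw [div_eq_inv_mul, div_eq_inv_mul]
    nlinarith [mul_le_mul_of_nonneg_left h1 h3.le, mul_le_mul_of_nonneg_left h2 h4.le]
  have key : -(M1 + lam i • (-((lamlo/lamhi^2) • S)) + lam i • (-((lamlo/lamhi^2) • S))
        + (π⁻¹ * (pc i)^2 + θ⁻¹ * qsq i) • BB
        + (((lam i)^2 * (lamlo/lamhi^2)^2) • S
          + (lam i • YQY + (π • YY + (((N:ℝ)-1) * θ) • YY))))
      = -(M1 - (lamlo^2/lamhi^2) • S + (psqmax/π + qsqmax/θ) • BB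
          + (lamhi • YQY + (π • YY + (((N:ℝ)-1) * θ) • YY)))
        + ((2*(lam i)*(lamlo/lamhi^2) - (lam i)^2*(lamlo/lamhi^2)^2 - lamlo^2/lamhi^2) • S
          + ((lamhi - lam i) • YQY
            + ((psqmax/π + qsqmax/θ - (π⁻¹*(pc i)^2 + θ⁻¹*qsq i)) • BB))) := by
    module
  rw [key]
  exact hLMI.add_posSemidef ((psd_smul hSpsd hd1).add
    ((psd_smul hYQY hd2).add (psd_smul hBB hd3)))
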